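/- Let μ be a compactly supported probability measure on ℝ with rad(μ) ≤ M (support in [−M, M]) and let G̃(z) = G_μ(1/z) = Σ_{k≥0} m_k z^{k+1} be the power series of the Cauchy transform at infinity. Then G̃ has an analytic inverse function defined on the disc of radius R₂ = (3 − 2√2)/M mapping into the disc of radius R₁ = (1 − 1/√2)/M; that is, there is an analytic function Ψ : {|w| < R₂} → {|z| < R₁} with G̃(Ψ(w)) = w. -/

import Mathlib

open MeasureTheory Metric Filter
open scoped Topology NNReal

noncomputable section Stmt19Aux

/-- Coefficients of the shifted moment series: `c 0 = 0`, `c (n+1) = m n`. -/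
def stmt19c (m : ℕ → ℝ) : ℕ → ℂ := fun n => if n = 0 then 0 else ((m (n - 1) : ℝ) : ℂ)

/-- The formal power series `Σ_k m_k z^{k+1}`. -/
def stmt19p (m : ℕ → ℝ) : FormalMultilinearSeries ℂ ℂ ℂ := fun n =>
  ContinuousMultilinearMap.mkPiRing ℂ (Fin n) (stmt19c m n)

/-- The truncated Cauchy transform `G̃`. -/
def stmt19g (m : ℕ → ℝ) : ℂ → ℂ := (stmt19p m).sum

variable {m : ℕ → ℝ} {M : ℝ}

lemma stmt19_norm_p (n : ℕ) : ‖stmt19p m n‖ = ‖stmt19c m n‖ :=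
  ContinuousMultilinearMap.norm_mkPiRing _

lemma stmt19_norm_c (hm : ∀ k, |m k| ≤ M ^ k) (n : ℕ) : ‖stmt19c m (n + 1)‖ ≤ M ^ n := by
  simpa [stmt19c, Complex.norm_real, Real.norm_eq_abs] using hm n

lemma stmt19_radius (hM : 0 < M) (hm : ∀ k, |m k| ≤ M ^ k) :
    ENNReal.ofReal (1 / M) ≤ (stmt19p m).radius := by
  refine ENNReal.le_of_forall_nnreal_lt fun r hr => ?_
  have hrM : (r : ℝ) < 1 / M := by
    rw [← ENNReal.ofReal_coe_nnreal] at hr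
    exact (ENNReal.ofReal_lt_ofReal_iff (by positivity)).1 hr
  have hx : M * (r : ℝ) < 1 := by
    rw [lt_div_iff₀ hM] at hrM; linarith [hrM]
  refine (stmt19p m).le_radius_of_bound (r : ℝ) fun n => ?_
  rcases n with _ | n
  · rw [stmt19_norm_p]
    simp [stmt19c]
  · have h1 : ‖stmt19p m (n + 1)‖ ≤ M ^ n := by
      rw [stmt19_norm_p]; exact stmt19_norm_c hm n
    have hr0 : (0:ℝ) ≤ r := r.coe_nonneg
    have h2 : M ^ n * (r : ℝ) ^ (n + 1) ≤ (r : ℝ) := by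
      have : M ^ n * (r:ℝ) ^ (n+1) = (r:ℝ) * (M * r) ^ n := by ring
      rw [this]
      have hMr0 : (0:ℝ) ≤ M * r := by positivity
      have : (M * (r:ℝ)) ^ n ≤ 1 := pow_le_one₀ hMr0 hx.le
      nlinarith
    calc ‖stmt19p m (n+1)‖ * (r:ℝ) ^ (n+1) ≤ M ^ n * (r:ℝ)^(n+1) := by
          exact mul_le_mul_of_nonneg_right h1 (by positivity)
      _ ≤ r := h2

lemma stmt19_mem_ball (hM : 0 < M) (hm : ∀ k, |m k| ≤ M ^ k) {z : ℂ} (hz : ‖z‖ < 1 / M) :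
    z ∈ Metric.eball (0 : ℂ) (stmt19p m).radius := by
  rw [Metric.mem_eball, edist_dist, dist_zero_right]
  exact lt_of_lt_of_le ((ENNReal.ofReal_lt_ofReal_iff (by positivity)).2 hz)
    (stmt19_radius hM hm)

lemma stmt19_hasSum (hM : 0 < M) (hm : ∀ k, |m k| ≤ M ^ k) {z : ℂ} (hz : ‖z‖ < 1 / M) :
    HasSum (fun k : ℕ => ((m k : ℝ) : ℂ) * z ^ (k + 1)) (stmt19g m z) := by
  have h := (stmt19p m).hasSum (stmt19_mem_ball hM hm hz)
  have h' : HasSum (fun n : ℕ => stmt19c m n * z ^ n) (stmt19g m z) := by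
    refine h.congr_fun fun n => ?_
    simp [stmt19p, ContinuousMultilinearMap.mkPiRing_apply, smul_eq_mul, mul_comm]
  have h2 := (hasSum_nat_add_iff' (f := fun n : ℕ => stmt19c m n * z ^ n)
    (g := stmt19g m z) 1).2 h'
  norm_num [stmt19c] at h2
  refine h2.congr_fun fun n => ?_
  simp [stmt19c]

lemma stmt19_analytic (hM : 0 < M) (hm : ∀ k, |m k| ≤ M ^ k) :
    AnalyticOnNhd ℂ (stmt19g m) (ball (0 : ℂ) (1 / M)) := by
  intro z hz
  have hrad : 0 < (stmt19p m).radius :=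
    lt_of_lt_of_le (ENNReal.ofReal_pos.2 (by positivity)) (stmt19_radius hM hm)
  have hb := (stmt19p m).hasFPowerSeriesOnBall hrad
  exact hb.analyticAt_of_mem (by simpa using stmt19_mem_ball hM hm (mem_ball_zero_iff.1 hz))

lemma stmt19_pow_diff {z1 z2 : ℂ} {r : ℝ} (h1 : ‖z1‖ ≤ r) (h2 : ‖z2‖ ≤ r) :
    ∀ n : ℕ, ‖z1 ^ (n + 1) - z2 ^ (n + 1)‖ ≤ (n + 1 : ℝ) * r ^ n * ‖z1 - z2‖ := by
  have hr0 : 0 ≤ r := le_trans (norm_nonneg _) h1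
  intro n
  induction n with
  | zero => simp
  | succ n ih =>
    have key : z1 ^ (n + 2) - z2 ^ (n + 2)
        = z1 ^ (n + 1) * (z1 - z2) + (z1 ^ (n + 1) - z2 ^ (n + 1)) * z2 := by ring
    calc ‖z1 ^ (n + 2) - z2 ^ (n + 2)‖
        ≤ ‖z1 ^ (n + 1) * (z1 - z2)‖ + ‖(z1 ^ (n + 1) - z2 ^ (n + 1)) * z2‖ := by
          rw [key]; exact norm_add_le _ _
      _ ≤ r ^ (n + 1) * ‖z1 - z2‖ + ((n + 1 : ℝ) * r ^ n * ‖z1 - z2‖) * r := by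
          rw [norm_mul, norm_mul, norm_pow]
          gcongr
      _ = ((n + 1 : ℕ) + 1 : ℝ) * r ^ (n + 1) * ‖z1 - z2‖ := by push_cast; ring

lemma stmt19_hasSum_aux {x : ℝ} (h0 : 0 ≤ x) (h1 : x < 1) :
    HasSum (fun k : ℕ => ((k : ℝ) + 2) * x ^ (k + 1)) (1 / (1 - x) ^ 2 - 1) := by
  have hx : ‖x‖ < 1 := by rwa [Real.norm_eq_abs, abs_of_nonneg h0]
  have b1 := hasSum_coe_mul_geometric_of_norm_lt_one hx
  have b2 := hasSum_geometric_of_lt_one h0 h1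
  have hS : HasSum (fun n : ℕ => ((n : ℝ) + 1) * x ^ n) (1 / (1 - x) ^ 2) := by
    have := b1.add b2
    have hval : x / (1 - x) ^ 2 + (1 - x)⁻¹ = 1 / (1 - x) ^ 2 := by
      have hne : 1 - x ≠ 0 := by linarith
      field_simp
      ring
    rw [hval] at this
    refine this.congr_fun fun n => ?_
    ring
  have h2 := (hasSum_nat_add_iff' (f := fun n : ℕ => ((n : ℝ) + 1) * x ^ n)
    (g := 1 / (1 - x) ^ 2) 1).2 hS
  norm_num at h2
  have h3 : (1 : ℝ) / (1 - x) ^ 2 - 1 = ((1 - x) ^ 2)⁻¹ - 1 := by rw [one_div]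
  rw [h3]
  refine h2.congr_fun fun n => ?_
  ring

lemma stmt19_lip (hM : 0 < M) (hm : ∀ k, |m k| ≤ M ^ k) (hm0 : m 0 = 1) {r : ℝ}
    (hx : M * r < 1) {z1 z2 : ℂ} (h1 : ‖z1‖ ≤ r) (h2 : ‖z2‖ ≤ r) :
    ‖(stmt19g m z1 - z1) - (stmt19g m z2 - z2)‖
      ≤ (1 / (1 - M * r) ^ 2 - 1) * ‖z1 - z2‖ := by
  have hr0 : 0 ≤ r := le_trans (norm_nonneg _) h1
  have hrM : r < 1 / M := by rw [lt_div_iff₀ hM]; linarith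
  have hz1 : ‖z1‖ < 1 / M := lt_of_le_of_lt h1 hrM
  have hz2 : ‖z2‖ < 1 / M := lt_of_le_of_lt h2 hrM
  have s1 := stmt19_hasSum hM hm hz1
  have s2 := stmt19_hasSum hM hm hz2
  have hd : HasSum (fun k : ℕ => ((m k : ℝ) : ℂ) * (z1 ^ (k + 1) - z2 ^ (k + 1)))
      (stmt19g m z1 - stmt19g m z2) := by
    refine (s1.sub s2).congr_fun fun k => ?_
    ring
  have hshift := (hasSum_nat_add_iff'
    (f := fun k : ℕ => ((m k : ℝ) : ℂ) * (z1 ^ (k + 1) - z2 ^ (k + 1)))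
    (g := stmt19g m z1 - stmt19g m z2) 1).2 hd
  norm_num [hm0] at hshift
  -- hshift : HasSum (fun k => m (k+1) * (z1^(k+2) - z2^(k+2)))
  --           (stmt19g m z1 - stmt19g m z2 - (z1 - z2))
  set x : ℝ := M * r with hxdef
  have hx0 : 0 ≤ x := by positivity
  have hT : HasSum (fun k : ℕ => (((k : ℝ) + 2) * x ^ (k + 1)) * ‖z1 - z2‖)
      ((1 / (1 - x) ^ 2 - 1) * ‖z1 - z2‖) := (stmt19_hasSum_aux hx0 hx).mul_right _
  have hterm : ∀ k : ℕ, ‖((m (k + 1) : ℝ) : ℂ) * (z1 ^ (k + 2) - z2 ^ (k + 2))‖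
      ≤ (((k : ℝ) + 2) * x ^ (k + 1)) * ‖z1 - z2‖ := by
    intro k
    rw [norm_mul]
    have hmb : ‖((m (k + 1) : ℝ) : ℂ)‖ ≤ M ^ (k + 1) := by
      simpa [Complex.norm_real, Real.norm_eq_abs] using hm (k + 1)
    have hpd := stmt19_pow_diff h1 h2 (k + 1)
    have hMk : (0:ℝ) ≤ M ^ (k+1) := by positivity
    calc ‖((m (k + 1) : ℝ) : ℂ)‖ * ‖z1 ^ (k + 2) - z2 ^ (k + 2)‖
        ≤ M ^ (k + 1) * (((k : ℝ) + 1 + 1) * r ^ (k + 1) * ‖z1 - z2‖) := by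
          refine mul_le_mul hmb ?_ (norm_nonneg _) hMk
          refine le_of_le_of_eq hpd ?_
          push_cast
          ring
      _ = (((k : ℝ) + 2) * x ^ (k + 1)) * ‖z1 - z2‖ := by
          rw [hxdef, mul_pow]
          ring
  have hsum_norm : Summable (fun k : ℕ => ‖((m (k + 1) : ℝ) : ℂ) * (z1 ^ (k + 2) - z2 ^ (k + 2))‖) :=
    Summable.of_nonneg_of_le (fun k => norm_nonneg _) hterm hT.summable
  calc ‖(stmt19g m z1 - z1) - (stmt19g m z2 - z2)‖
      = ‖∑' k : ℕ, ((m (k + 1) : ℝ) : ℂ) * (z1 ^ (k + 2) - z2 ^ (k + 2))‖ := by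
        rw [hshift.tsum_eq]
        ring_nf
    _ ≤ ∑' k : ℕ, ‖((m (k + 1) : ℝ) : ℂ) * (z1 ^ (k + 2) - z2 ^ (k + 2))‖ :=
        norm_tsum_le_tsum_norm hsum_norm
    _ ≤ ∑' k : ℕ, (((k : ℝ) + 2) * x ^ (k + 1)) * ‖z1 - z2‖ :=
        Summable.tsum_le_tsum hterm hsum_norm hT.summable
    _ = (1 / (1 - x) ^ 2 - 1) * ‖z1 - z2‖ := hT.tsum_eq

lemma stmt19_bound (hM : 0 < M) (hm : ∀ k, |m k| ≤ M ^ k) (hm0 : m 0 = 1) {r : ℝ}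
    (hx : M * r < 1) {z : ℂ} (h1 : ‖z‖ ≤ r) :
    ‖stmt19g m z - z‖ ≤ M * r ^ 2 / (1 - M * r) := by
  have hr0 : 0 ≤ r := le_trans (norm_nonneg _) h1
  have hrM : r < 1 / M := by rw [lt_div_iff₀ hM]; linarith
  have hz1 : ‖z‖ < 1 / M := lt_of_le_of_lt h1 hrM
  have s1 := stmt19_hasSum hM hm hz1
  have hshift := (hasSum_nat_add_iff'
    (f := fun k : ℕ => ((m k : ℝ) : ℂ) * z ^ (k + 1)) (g := stmt19g m z) 1).2 s1
  norm_num [hm0] at hshift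
  set x : ℝ := M * r with hxdef
  have hx0 : 0 ≤ x := by positivity
  have hT : HasSum (fun k : ℕ => M * r ^ 2 * x ^ k) (M * r ^ 2 * (1 - x)⁻¹) :=
    (hasSum_geometric_of_lt_one hx0 hx).mul_left _
  have hterm : ∀ k : ℕ, ‖((m (k + 1) : ℝ) : ℂ) * z ^ (k + 2)‖ ≤ M * r ^ 2 * x ^ k := by
    intro k
    rw [norm_mul, norm_pow]
    have hmb : ‖((m (k + 1) : ℝ) : ℂ)‖ ≤ M ^ (k + 1) := by
      simpa [Complex.norm_real, Real.norm_eq_abs] using hm (k + 1)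
    have hzb : ‖z‖ ^ (k + 2) ≤ r ^ (k + 2) := pow_le_pow_left₀ (norm_nonneg _) h1 _
    calc ‖((m (k + 1) : ℝ) : ℂ)‖ * ‖z‖ ^ (k + 2)
        ≤ M ^ (k + 1) * r ^ (k + 2) := by
          refine mul_le_mul hmb hzb (by positivity) (by positivity)
      _ = M * r ^ 2 * x ^ k := by rw [hxdef, mul_pow]; ring
  have hsum_norm : Summable (fun k : ℕ => ‖((m (k + 1) : ℝ) : ℂ) * z ^ (k + 2)‖) :=
    Summable.of_nonneg_of_le (fun k => norm_nonneg _) hterm hT.summable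
  calc ‖stmt19g m z - z‖
      = ‖∑' k : ℕ, ((m (k + 1) : ℝ) : ℂ) * z ^ (k + 2)‖ := by rw [hshift.tsum_eq]
    _ ≤ ∑' k : ℕ, ‖((m (k + 1) : ℝ) : ℂ) * z ^ (k + 2)‖ := norm_tsum_le_tsum_norm hsum_norm
    _ ≤ ∑' k : ℕ, M * r ^ 2 * x ^ k := Summable.tsum_le_tsum hterm hsum_norm hT.summable
    _ = M * r ^ 2 * (1 - x)⁻¹ := hT.tsum_eq
    _ = M * r ^ 2 / (1 - M * r) := by rw [hxdef]; ring

lemma stmt19_sqrt2_facts : 0 < Real.sqrt 2 ∧ 1 < Real.sqrt 2 ∧ Real.sqrt 2 ^ 2 = 2 := by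
  have h2 : Real.sqrt 2 ^ 2 = 2 := Real.sq_sqrt (by norm_num)
  have h0 : 0 ≤ Real.sqrt 2 := Real.sqrt_nonneg 2
  refine ⟨by nlinarith, by nlinarith, h2⟩

set_option maxHeartbeats 1000000 in
lemma stmt19_exists (hM : 0 < M) (hm : ∀ k, |m k| ≤ M ^ k) (hm0 : m 0 = 1) {w : ℂ}
    (hw : ‖w‖ < (3 - 2 * Real.sqrt 2) / M) :
    ∃ z : ℂ, ‖z‖ < (1 - 1 / Real.sqrt 2) / M ∧ stmt19g m z = w := by
  obtain ⟨hs0, hs1, hs2⟩ := stmt19_sqrt2_facts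
  set s : ℝ := Real.sqrt 2 with hsdef
  clear_value s
  set x₀ : ℝ := 1 - 1 / s with hx₀def
  clear_value x₀
  have hx₀pos : 0 < x₀ := by
    have : 1 / s < 1 := by rw [div_lt_one hs0]; exact hs1
    simp only [hx₀def]; linarith
  have hx₀lt : x₀ < 1 := by
    have : 0 < 1 / s := by positivity
    simp only [hx₀def]; linarith
  have h1x₀ : 1 - x₀ = 1 / s := by simp [hx₀def]
  have hψval : x₀ * (1 - 2 * x₀) / (1 - x₀) = 3 - 2 * s := by
    rw [h1x₀]
    have hsne : s ≠ 0 := ne_of_gt hs0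
    subst hx₀def
    field_simp
    nlinarith [hs2]
  have hb : M * ‖w‖ < 3 - 2 * s := by
    have := (lt_div_iff₀ hM).1 hw
    linarith
  have hψcont : ContinuousAt (fun x : ℝ => x * (1 - 2 * x) / (1 - x)) x₀ := by
    apply ContinuousAt.div
    · fun_prop
    · fun_prop
    · rw [h1x₀]; positivity
  have hb' : M * ‖w‖ < x₀ * (1 - 2 * x₀) / (1 - x₀) := by rw [hψval]; exact hb
  have hev : ∀ᶠ x in 𝓝 x₀, M * ‖w‖ < x * (1 - 2 * x) / (1 - x) :=
    hψcont.eventually_const_lt hb'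
  have h0x : ∀ᶠ x in 𝓝 x₀, 0 < x := eventually_gt_nhds hx₀pos
  have hall := ((hev.and h0x).filter_mono (nhdsWithin_le_nhds (s := Set.Iio x₀))).and
    eventually_mem_nhdsWithin
  obtain ⟨x, ⟨hb2, hx0⟩, hxlt⟩ := hall.exists
  rw [Set.mem_Iio] at hxlt
  clear hψcont hev h0x hall hb hb' hψval
  -- now set r = x / M
  have hx1 : x < 1 := lt_trans hxlt hx₀lt
  have h1x : 0 < 1 - x := by linarith
  set r : ℝ := x / M with hrdef
  clear_value r
  have hr0 : 0 < r := by rw [hrdef]; positivity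
  have hMr : M * r = x := by rw [hrdef]; field_simp
  have hMr1 : M * r < 1 := by rw [hMr]; exact hx1
  set L : ℝ := 1 / (1 - M * r) ^ 2 - 1 with hLdef
  clear_value L
  have hL0 : 0 ≤ L := by
    rw [hLdef, hMr]
    have h1 : (1 - x) ^ 2 ≤ 1 := by nlinarith
    have h2 : 0 < (1 - x) ^ 2 := by positivity
    have h4 : 1 ≤ 1 / (1 - x) ^ 2 := by rw [le_div_iff₀ h2, one_mul]; exact h1
    linarith
  have hL1 : L < 1 := by
    rw [hLdef, hMr]
    have hxx : 1 - x > 1 / s := by rw [← h1x₀]; linarith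
    have h12 : (1 / s) ^ 2 = 1 / 2 := by rw [div_pow, hs2, one_pow]
    have h2 : (1 - x) ^ 2 > 1 / 2 := by
      nlinarith [hxx, h12, sq_nonneg (1 - x - 1 / s), div_pos one_pos hs0]
    have h3 : 1 / (1 - x) ^ 2 < 2 := by
      rw [div_lt_iff₀ (by positivity)]
      nlinarith
    linarith
  have hb2' : M * ‖w‖ * (1 - x) < x * (1 - 2 * x) := (lt_div_iff₀ h1x).1 hb2
  have hself : ∀ z : ℂ, ‖z‖ ≤ r → ‖w - (stmt19g m z - z)‖ ≤ r := by
    intro z hz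
    have hF := stmt19_bound hM hm hm0 hMr1 hz
    have key : ‖w‖ + M * r ^ 2 / (1 - M * r) ≤ r := by
      have e1 : M * r ^ 2 = x * r := by rw [← hMr]; ring
      rw [hMr, e1]
      have hMrr : M * (r * (1 - 2 * x)) = x * (1 - 2 * x) := by rw [← hMr]; ring
      have h5 : ‖w‖ * (1 - x) ≤ r * (1 - 2 * x) := by nlinarith [hb2', hM, hMrr]
      have h6 : x * r / (1 - x) + r * (1 - 2 * x) / (1 - x) = r := by
        field_simp
        ring
      have h7 : ‖w‖ ≤ r * (1 - 2 * x) / (1 - x) := (le_div_iff₀ h1x).2 h5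
      linarith
    calc ‖w - (stmt19g m z - z)‖ ≤ ‖w‖ + ‖stmt19g m z - z‖ := norm_sub_le _ _
      _ ≤ ‖w‖ + M * r ^ 2 / (1 - M * r) := by linarith
      _ ≤ r := key
  -- Banach fixed point on the closed ball of radius r
  haveI hne : Nonempty (closedBall (0:ℂ) r) := ⟨⟨0, mem_closedBall_self hr0.le⟩⟩
  haveI : CompleteSpace (closedBall (0:ℂ) r) := isClosed_closedBall.completeSpace_coe
  set Q : closedBall (0:ℂ) r → closedBall (0:ℂ) r := fun z =>
    ⟨w - (stmt19g m z.1 - z.1), by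
      rw [mem_closedBall, dist_zero_right]
      exact hself z.1 (by
        have := z.2
        rwa [mem_closedBall, dist_zero_right] at this)⟩ with hQdef
  have hQlip : LipschitzWith (Real.toNNReal L) Q := by
    refine LipschitzWith.of_dist_le_mul fun a b => ?_
    rw [Subtype.dist_eq, Subtype.dist_eq, dist_eq_norm, dist_eq_norm,
      Real.coe_toNNReal _ hL0]
    have ha : ‖a.1‖ ≤ r := by have := a.2; rwa [mem_closedBall, dist_zero_right] at this
    have hb3 : ‖b.1‖ ≤ r := by have := b.2; rwa [mem_closedBall, dist_zero_right] at this
    have hlip := stmt19_lip hM hm hm0 hMr1 hb3 ha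
    calc ‖(Q a).1 - (Q b).1‖ = ‖(stmt19g m b.1 - b.1) - (stmt19g m a.1 - a.1)‖ := by
          simp only [hQdef]
          ring_nf
      _ ≤ (1 / (1 - M * r) ^ 2 - 1) * ‖b.1 - a.1‖ := hlip
      _ = L * ‖a.1 - b.1‖ := by rw [hLdef, norm_sub_rev]
  have hcontr : ContractingWith (Real.toNNReal L) Q := by
    constructor
    · rw [← Real.toNNReal_one]
      exact (Real.toNNReal_lt_toNNReal_iff (by norm_num)).2 hL1
    · exact hQlip
  set z := ContractingWith.fixedPoint Q hcontr with hzdef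
  have hfix := hcontr.fixedPoint_isFixedPt
  have hfixv : w - (stmt19g m z.1 - z.1) = z.1 := congrArg Subtype.val hfix
  have hzr : ‖z.1‖ ≤ r := by
    have := z.2
    rwa [mem_closedBall, dist_zero_right] at this
  have hrR1 : r < x₀ / M := by
    rw [hrdef]
    gcongr
  exact ⟨z.1, lt_of_le_of_lt hzr hrR1, by linear_combination -hfixv⟩

lemma stmt19_L_lt_one {x : ℝ} (hx : x < 1 - 1 / Real.sqrt 2) (hx0 : 0 ≤ x) :
    1 / (1 - x) ^ 2 - 1 < 1 ∧ 0 ≤ 1 / (1 - x) ^ 2 - 1 ∧ x < 1 := by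
  obtain ⟨hs0, hs1, hs2⟩ := stmt19_sqrt2_facts
  have hinv : 0 < 1 / Real.sqrt 2 := by positivity
  have hx1 : x < 1 := by linarith
  have h1x : 0 < 1 - x := by linarith
  have hxx : 1 / Real.sqrt 2 < 1 - x := by linarith
  have h12 : (1 / Real.sqrt 2) ^ 2 = 1 / 2 := by
    rw [div_pow, hs2, one_pow]
  have h2 : (1 - x) ^ 2 > 1 / 2 := by nlinarith
  have h3 : 1 / (1 - x) ^ 2 < 2 := by
    rw [div_lt_iff₀ (by positivity)]
    nlinarith
  have h4 : (1 - x) ^ 2 ≤ 1 := by nlinarith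
  have h5 : 1 ≤ 1 / (1 - x) ^ 2 := by rw [le_div_iff₀ (by positivity), one_mul]; exact h4
  exact ⟨by linarith, by linarith, hx1⟩

lemma stmt19_inj (hM : 0 < M) (hm : ∀ k, |m k| ≤ M ^ k) (hm0 : m 0 = 1) {z1 z2 : ℂ}
    (h1 : ‖z1‖ < (1 - 1 / Real.sqrt 2) / M) (h2 : ‖z2‖ < (1 - 1 / Real.sqrt 2) / M)
    (he : stmt19g m z1 = stmt19g m z2) : z1 = z2 := by
  set r : ℝ := max ‖z1‖ ‖z2‖ with hrdef
  have hr1 : ‖z1‖ ≤ r := le_max_left _ _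
  have hr2 : ‖z2‖ ≤ r := le_max_right _ _
  have hrR1 : r < (1 - 1 / Real.sqrt 2) / M := max_lt h1 h2
  have hr0 : 0 ≤ r := le_trans (norm_nonneg _) hr1
  have hxlt : M * r < 1 - 1 / Real.sqrt 2 := by
    rw [← mul_comm]
    calc r * M < ((1 - 1 / Real.sqrt 2) / M) * M := by gcongr
      _ = 1 - 1 / Real.sqrt 2 := by field_simp
  obtain ⟨hL1, hL0, hx1⟩ := stmt19_L_lt_one hxlt (by positivity)
  have hMr1 : M * r < 1 := by linarith
  have hlip := stmt19_lip hM hm hm0 hMr1 hr1 hr2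
  rw [he] at hlip
  have hkey : ‖z2 - z1‖ ≤ (1 / (1 - M * r) ^ 2 - 1) * ‖z1 - z2‖ := by
    calc ‖z2 - z1‖ = ‖stmt19g m z2 - z1 - (stmt19g m z2 - z2)‖ := by ring_nf
      _ ≤ (1 / (1 - M * r) ^ 2 - 1) * ‖z1 - z2‖ := hlip
  rw [norm_sub_rev z2 z1] at hkey
  have hnn : ‖z1 - z2‖ ≤ 0 := by nlinarith [norm_nonneg (z1 - z2)]
  have : z1 - z2 = 0 := by
    have := le_antisymm hnn (norm_nonneg _)
    exact norm_eq_zero.1 this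
  exact sub_eq_zero.1 this

lemma stmt19_deriv (hM : 0 < M) (hm : ∀ k, |m k| ≤ M ^ k) (hm0 : m 0 = 1) {z0 : ℂ}
    (h0 : ‖z0‖ < (1 - 1 / Real.sqrt 2) / M) :
    ∃ d : ℂ, HasStrictDerivAt (stmt19g m) d z0 ∧ d ≠ 0 := by
  obtain ⟨hs0, hs1, hs2⟩ := stmt19_sqrt2_facts
  have hinv : 0 < 1 / Real.sqrt 2 := by positivity
  have hR1M : (1 - 1 / Real.sqrt 2) / M < 1 / M := by gcongr; linarith
  set r' : ℝ := (‖z0‖ + (1 - 1 / Real.sqrt 2) / M) / 2 with hr'def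
  have hz0r' : ‖z0‖ < r' := by rw [hr'def]; linarith
  have hr'R1 : r' < (1 - 1 / Real.sqrt 2) / M := by rw [hr'def]; linarith
  have hr'0 : 0 < r' := lt_of_le_of_lt (norm_nonneg z0) hz0r'
  have hxlt : M * r' < 1 - 1 / Real.sqrt 2 := by
    rw [mul_comm]
    calc r' * M < ((1 - 1 / Real.sqrt 2) / M) * M := by gcongr
      _ = 1 - 1 / Real.sqrt 2 := by field_simp
  obtain ⟨hL1, hL0, hx1⟩ := stmt19_L_lt_one hxlt (by positivity)
  have hMr1 : M * r' < 1 := by linarith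
  -- g is analytic at z0
  have hz0M : ‖z0‖ < 1 / M := lt_trans h0 hR1M
  have hA : AnalyticAt ℂ (stmt19g m) z0 :=
    stmt19_analytic hM hm z0 (mem_ball_zero_iff.2 hz0M)
  obtain ⟨q, hq⟩ := hA
  have hsd : HasStrictDerivAt (stmt19g m) (q.coeff 1) z0 := hq.hasStrictDerivAt
  set d : ℂ := q.coeff 1 with hddef
  have hF : HasDerivAt (fun z => stmt19g m z - z) (d - 1) z0 :=
    hsd.hasDerivAt.sub (hasDerivAt_id z0)
  set L : ℝ := 1 / (1 - M * r') ^ 2 - 1 with hLdef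
  have hlipon : LipschitzOnWith (Real.toNNReal L) (fun z => stmt19g m z - z)
      (ball (0:ℂ) r') := by
    refine LipschitzOnWith.of_dist_le_mul fun a ha b hb => ?_
    rw [dist_eq_norm, dist_eq_norm, Real.coe_toNNReal _ hL0]
    exact stmt19_lip hM hm hm0 hMr1 (le_of_lt (mem_ball_zero_iff.1 ha))
      (le_of_lt (mem_ball_zero_iff.1 hb))
  have hnb : ball (0:ℂ) r' ∈ 𝓝 z0 := isOpen_ball.mem_nhds (mem_ball_zero_iff.2 hz0r')
  have hle : ‖d - 1‖ ≤ L := by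
    have h' : HasFDerivAt (fun z => stmt19g m z - z)
        (ContinuousLinearMap.smulRight (1 : ℂ →L[ℂ] ℂ) (d - 1)) z0 := hF.hasFDerivAt
    have := h'.le_of_lipschitzOn hnb hlipon
    rw [ContinuousLinearMap.norm_smulRight_apply, norm_one, one_mul] at this
    exact le_trans this (le_of_eq (Real.coe_toNNReal _ hL0))
  refine ⟨d, hsd, fun hd0 => ?_⟩
  rw [hd0] at hle
  simp only [zero_sub, norm_neg, norm_one] at hle
  linarith

end Stmt19Aux

open MeasureTheory Metric

set_option maxHeartbeats 1000000

/-- Inverse function of the truncated Cauchy transform: for a probability measure `μ` on ℝ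
supported in `[-M, M]`, the moment series `G̃(z) = Σ_k m_k z^{k+1}` admits an analytic right
inverse `Ψ` mapping the disc of radius `R₂ = (3 - 2√2)/M` into the disc of radius
`R₁ = (1 - 1/√2)/M`, i.e. `G̃(Ψ(w)) = w`. -/
theorem stmt19 (μ : Measure ℝ) [IsProbabilityMeasure μ] (M : ℝ) (hM : 0 < M)
    (hsupp : μ ((Set.Icc (-M) M)ᶜ) = 0) :
    ∃ Ψ : ℂ → ℂ, AnalyticOnNhd ℂ Ψ (ball (0:ℂ) ((3 - 2 * Real.sqrt 2) / M)) ∧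
      ∀ w ∈ ball (0:ℂ) ((3 - 2 * Real.sqrt 2) / M),
        Ψ w ∈ ball (0:ℂ) ((1 - 1 / Real.sqrt 2) / M) ∧
        HasSum (fun k : ℕ => ((∫ t, t ^ k ∂μ : ℝ) : ℂ) * (Ψ w) ^ (k + 1)) w := by
  obtain ⟨hs0, hs1, hs2⟩ := stmt19_sqrt2_facts
  have hinv : 0 < 1 / Real.sqrt 2 := by positivity
  set m : ℕ → ℝ := fun k => ∫ t, t ^ k ∂μ with hmdef
  -- a.e. bound on |t|
  have hae : ∀ᵐ t ∂μ, t ∈ Set.Icc (-M) M := by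
    rw [ae_iff]
    have hset : {a : ℝ | ¬ a ∈ Set.Icc (-M) M} = (Set.Icc (-M) M)ᶜ := rfl
    rw [hset]
    exact hsupp
  have habs : ∀ k : ℕ, ∀ᵐ t ∂μ, ‖t ^ k‖ ≤ M ^ k := by
    intro k
    filter_upwards [hae] with t ht
    rw [Real.norm_eq_abs, abs_pow]
    exact pow_le_pow_left₀ (abs_nonneg t) (abs_le.2 ⟨ht.1, ht.2⟩) _
  have hm : ∀ k, |m k| ≤ M ^ k := by
    intro k
    have h1 := norm_integral_le_of_norm_le_const (μ := μ) (habs k)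
    simpa [Real.norm_eq_abs, measure_univ] using h1
  have hm0 : m 0 = 1 := by
    simp [hmdef, measure_univ]
  have hR1M : (1 - 1 / Real.sqrt 2) / M < 1 / M := by gcongr; linarith
  -- choose the inverse pointwise
  have hex : ∀ w ∈ ball (0:ℂ) ((3 - 2 * Real.sqrt 2) / M),
      ∃ z : ℂ, ‖z‖ < (1 - 1 / Real.sqrt 2) / M ∧ stmt19g m z = w := fun w hw =>
    stmt19_exists hM hm hm0 (mem_ball_zero_iff.1 hw)
  classical
  set Ψ : ℂ → ℂ := fun w =>
    if h : w ∈ ball (0:ℂ) ((3 - 2 * Real.sqrt 2) / M) then (hex w h).choose else 0 with hΨdef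
  have hΨprop : ∀ w ∈ ball (0:ℂ) ((3 - 2 * Real.sqrt 2) / M),
      ‖Ψ w‖ < (1 - 1 / Real.sqrt 2) / M ∧ stmt19g m (Ψ w) = w := by
    intro w hw
    rw [hΨdef]
    simp only [dif_pos hw]
    exact (hex w hw).choose_spec
  refine ⟨Ψ, ?_, fun w hw => ?_⟩
  · refine DifferentiableOn.analyticOnNhd ?_ isOpen_ball
    intro w₀ hw₀
    refine DifferentiableAt.differentiableWithinAt ?_
    obtain ⟨hΨball, hΨeq⟩ := hΨprop w₀ hw₀
    obtain ⟨d, hsd, hd0⟩ := stmt19_deriv hM hm hm0 hΨball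
    have e := hsd.hasStrictFDerivAt_equiv hd0
    set φ : ℂ → ℂ := e.localInverse _ _ _ with hφdef
    have hφdiff : DifferentiableAt ℂ φ w₀ := by
      have := e.to_localInverse.differentiableAt
      rwa [hΨeq] at this
    have hev1 : ∀ᶠ w in 𝓝 w₀, w ∈ ball (0:ℂ) ((3 - 2 * Real.sqrt 2) / M) :=
      isOpen_ball.eventually_mem hw₀
    have hev2 : ∀ᶠ w in 𝓝 w₀, stmt19g m (φ w) = w := by
      have := e.eventually_right_inverse
      rwa [hΨeq] at this
    have hφw₀ : φ w₀ = Ψ w₀ := by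
      have := e.localInverse_apply_image
      rwa [hΨeq] at this
    have hφcont : ContinuousAt φ w₀ := by
      have := e.localInverse_continuousAt
      rwa [hΨeq] at this
    have hev3 : ∀ᶠ w in 𝓝 w₀, φ w ∈ ball (0:ℂ) ((1 - 1 / Real.sqrt 2) / M) := by
      refine hφcont.eventually_mem ?_
      rw [hφw₀]
      exact isOpen_ball.mem_nhds (mem_ball_zero_iff.2 hΨball)
    have heq : Ψ =ᶠ[𝓝 w₀] φ := by
      filter_upwards [hev1, hev2, hev3] with w h1 h2 h3
      obtain ⟨hb1, hb2⟩ := hΨprop w h1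
      exact stmt19_inj hM hm hm0 hb1 (mem_ball_zero_iff.1 h3) (by rw [hb2, h2])
    exact hφdiff.congr_of_eventuallyEq heq
  · obtain ⟨hb1, hb2⟩ := hΨprop w hw
    refine ⟨mem_ball_zero_iff.2 hb1, ?_⟩
    have hsum := stmt19_hasSum hM hm (lt_trans hb1 hR1M)
    rw [hb2] at hsum
    exact hsum
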